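/- Let (A,α,β) be a pre-Novikov coalgebra and (B,Δα,Δβ) a right Novikov co-dialgebra over a field k of characteristic 0. Define δ : A⊗B → (A⊗B)⊗(A⊗B) by δ(a⊗x) := β(a)•Δβ(x) − (τα(a))•(τΔα(x)). Then (A⊗B, δ) is a pre-Lie coalgebra. -/

import Mathlib

open TensorProduct

noncomputable section

variable {k : Type*} [Field k]
section CoDefs
variable {A : Type*} [AddCommGroup A] [Module k A]

/-- `(f ⊗ id)` on `A⊗A`, landing in `A⊗(A⊗A)` via the associator. -/
def lmap3 (f : A →ₗ[k] A ⊗[k] A) : A ⊗[k] A →ₗ[k] A ⊗[k] (A ⊗[k] A) :=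
  (TensorProduct.assoc k A A A).toLinearMap ∘ₗ TensorProduct.map f LinearMap.id

/-- `(id ⊗ f)` on `A⊗A`, landing in `A⊗(A⊗A)`. -/
def rmap3 (f : A →ₗ[k] A ⊗[k] A) : A ⊗[k] A →ₗ[k] A ⊗[k] (A ⊗[k] A) :=
  TensorProduct.map LinearMap.id f

/-- `τ ⊗ id` on the triple tensor product `A⊗(A⊗A)`: `a⊗(b⊗c) ↦ b⊗(a⊗c)`. -/
def swap12 : A ⊗[k] (A ⊗[k] A) →ₗ[k] A ⊗[k] (A ⊗[k] A) :=
  (TensorProduct.assoc k A A A).toLinearMap ∘ₗ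
    TensorProduct.map (TensorProduct.comm k A A).toLinearMap LinearMap.id ∘ₗ
    (TensorProduct.assoc k A A A).symm.toLinearMap

/-- `id ⊗ τ` on the triple tensor product `A⊗(A⊗A)`: `a⊗(b⊗c) ↦ a⊗(c⊗b)`. -/
def swap23 : A ⊗[k] (A ⊗[k] A) →ₗ[k] A ⊗[k] (A ⊗[k] A) :=
  TensorProduct.map LinearMap.id (TensorProduct.comm k A A).toLinearMap

/-- The flip `τ` on `A ⊗ A`. -/
def tau2 : A ⊗[k] A →ₗ[k] A ⊗[k] A := (TensorProduct.comm k A A).toLinearMap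

/-- A pre-Novikov coalgebra `(A, α, β)`. -/
def IsPreNovikovCoalgebra (α β : A →ₗ[k] A ⊗[k] A) : Prop :=
  (∀ a : A, lmap3 α (α a) + swap12 (rmap3 α (β a)) - rmap3 (α + β) (α a)
      - swap12 (lmap3 β (α a)) = 0) ∧
  (∀ a : A, rmap3 β (β a) + swap12 (lmap3 (α + β) (β a)) - lmap3 (α + β) (β a)
      - swap12 (rmap3 β (β a)) = 0) ∧
  (∀ a : A, swap23 (lmap3 β (α a)) - lmap3 (α + β) (β a) = 0) ∧
  (∀ a : A, swap23 (lmap3 α (α a)) - lmap3 α (α a) = 0)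

/-- A right Novikov co-dialgebra `(B, Δα, Δβ)` (denoted `(A, Da, Db)` here). -/
def IsRightNovikovCoDialgebra (Da Db : A →ₗ[k] A ⊗[k] A) : Prop :=
  (∀ x : A, rmap3 Db (Db x) = swap12 (rmap3 Db (Db x))) ∧
  (∀ x : A, rmap3 Da (Db x) = swap12 (rmap3 Da (Da x))) ∧
  (∀ x : A, lmap3 Db (Db x) = lmap3 Da (Db x)) ∧
  (∀ x : A, rmap3 Db (Da x) = rmap3 Da (Da x)) ∧
  (∀ x : A, rmap3 Db (Db x) - swap23 (rmap3 Da (Db x))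
      = lmap3 Db (Db x) - swap23 (lmap3 Db (Da x))) ∧
  (∀ x : A, rmap3 Db (Da x) - swap23 (rmap3 Da (Da x))
      = lmap3 Da (Da x) - swap23 (lmap3 Da (Da x)))

/-- A pre-Lie coalgebra `(L, δ)`. -/
def IsPreLieCoalgebra (δ : A →ₗ[k] A ⊗[k] A) : Prop :=
  ∀ a : A, rmap3 δ (δ a) - swap12 (rmap3 δ (δ a)) = lmap3 δ (δ a) - swap12 (lmap3 δ (δ a))

/-- A right Novikov coalgebra `(B, Δ)`. -/
def IsRightNovikovCoalgebra (Δ : A →ₗ[k] A ⊗[k] A) : Prop :=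
  (∀ x : A, lmap3 Δ (Δ x) - swap23 (lmap3 Δ (Δ x))
      = rmap3 Δ (Δ x) - swap23 (rmap3 Δ (Δ x))) ∧
  (∀ x : A, rmap3 Δ (Δ x) = swap12 (rmap3 Δ (Δ x)))

end CoDefs


section AuxPreLie
variable {k : Type*} [Field k]
variable {A : Type*} [AddCommGroup A] [Module k A]
variable {B : Type*} [AddCommGroup B] [Module k B]

theorem rmap3_add (f g : A →ₗ[k] A ⊗[k] A) (z : A ⊗[k] A) :
    rmap3 (f + g) z = rmap3 f z + rmap3 g z := by
  have h : rmap3 (k := k) (A := A) (f + g) = rmap3 f + rmap3 g := by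
    ext u v; simp [rmap3, tmul_add]
  rw [h, LinearMap.add_apply]

theorem rmap3_sub (f g : A →ₗ[k] A ⊗[k] A) (z : A ⊗[k] A) :
    rmap3 (f - g) z = rmap3 f z - rmap3 g z := by
  have h : rmap3 (k := k) (A := A) (f - g) = rmap3 f - rmap3 g := by
    ext u v; simp [rmap3, tmul_sub]
  rw [h, LinearMap.sub_apply]

theorem lmap3_add (f g : A →ₗ[k] A ⊗[k] A) (z : A ⊗[k] A) :
    lmap3 (f + g) z = lmap3 f z + lmap3 g z := by
  have h : lmap3 (k := k) (A := A) (f + g) = lmap3 f + lmap3 g := by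
    ext u v; simp [lmap3, add_tmul]
  rw [h, LinearMap.add_apply]

theorem lmap3_sub (f g : A →ₗ[k] A ⊗[k] A) (z : A ⊗[k] A) :
    lmap3 (f - g) z = lmap3 f z - lmap3 g z := by
  have h : lmap3 (k := k) (A := A) (f - g) = lmap3 f - lmap3 g := by
    ext u v; simp [lmap3, sub_tmul]
  rw [h, LinearMap.sub_apply]

theorem sw12_sw12 (z : A ⊗[k] (A ⊗[k] A)) : swap12 (swap12 z) = z := by
  have h : (swap12 ∘ₗ swap12 : A ⊗[k] (A ⊗[k] A) →ₗ[k] _) = LinearMap.id := by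
    ext a b c; simp [swap12]
  exact LinearMap.congr_fun h z

theorem sw23_sw23 (z : A ⊗[k] (A ⊗[k] A)) : swap23 (swap23 z) = z := by
  have h : (swap23 ∘ₗ swap23 : A ⊗[k] (A ⊗[k] A) →ₗ[k] _) = LinearMap.id := by
    ext a b c; simp [swap23]
  exact LinearMap.congr_fun h z

theorem braid (z : A ⊗[k] (A ⊗[k] A)) :
    swap23 (swap12 (swap23 z)) = swap12 (swap23 (swap12 z)) := by
  have h : (swap23 ∘ₗ swap12 ∘ₗ swap23 : A ⊗[k] (A ⊗[k] A) →ₗ[k] _)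
      = swap12 ∘ₗ swap23 ∘ₗ swap12 := by
    ext a b c; simp [swap12, swap23]
  exact LinearMap.congr_fun h z

theorem c1e (f : A →ₗ[k] A ⊗[k] A) (z : A ⊗[k] A) :
    rmap3 f (tau2 z) = swap12 (swap23 (lmap3 f z)) := by
  have h : rmap3 f ∘ₗ tau2 = swap12 ∘ₗ swap23 ∘ₗ lmap3 f := by
    ext u v
    simp only [AlgebraTensorModule.curry_apply, curry_apply, LinearMap.coe_restrictScalars,
      LinearMap.coe_comp, Function.comp_apply, rmap3, lmap3, tau2, map_tmul,
      LinearEquiv.coe_coe, comm_tmul, LinearMap.id_coe, id_eq]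
    induction f u using TensorProduct.induction_on with
    | zero => simp
    | tmul r s => simp [swap12, swap23]
    | add p q hp hq => simp only [add_tmul, map_add, tmul_add, hp, hq]
  exact LinearMap.congr_fun h z

theorem c2e (f : A →ₗ[k] A ⊗[k] A) (z : A ⊗[k] A) :
    lmap3 f (tau2 z) = swap23 (swap12 (rmap3 f z)) := by
  have h : lmap3 f ∘ₗ tau2 = swap23 ∘ₗ swap12 ∘ₗ rmap3 f := by
    ext u v
    simp only [AlgebraTensorModule.curry_apply, curry_apply, LinearMap.coe_restrictScalars,
      LinearMap.coe_comp, Function.comp_apply, rmap3, lmap3, tau2, map_tmul,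
      LinearEquiv.coe_coe, comm_tmul, LinearMap.id_coe, id_eq]
    induction f v using TensorProduct.induction_on with
    | zero => simp
    | tmul r s => simp [swap12, swap23]
    | add p q hp hq => simp only [add_tmul, map_add, tmul_add, hp, hq]
  exact LinearMap.congr_fun h z

theorem c3e (f : A →ₗ[k] A ⊗[k] A) (z : A ⊗[k] A) :
    rmap3 (tau2 ∘ₗ f) z = swap23 (rmap3 f z) := by
  have h : rmap3 (tau2 ∘ₗ f) = (swap23 ∘ₗ rmap3 f : A ⊗[k] A →ₗ[k] _) := by
    ext u v; simp [rmap3, swap23, tau2]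
  exact LinearMap.congr_fun h z

theorem c4e (f : A →ₗ[k] A ⊗[k] A) (z : A ⊗[k] A) :
    lmap3 (tau2 ∘ₗ f) z = swap12 (lmap3 f z) := by
  have h : lmap3 (tau2 ∘ₗ f) = (swap12 ∘ₗ lmap3 f : A ⊗[k] A →ₗ[k] _) := by
    ext u v
    simp only [AlgebraTensorModule.curry_apply, curry_apply, LinearMap.coe_restrictScalars,
      LinearMap.coe_comp, Function.comp_apply, lmap3, tau2, map_tmul,
      LinearEquiv.coe_coe, comm_tmul, LinearMap.id_coe, id_eq]
    induction f u using TensorProduct.induction_on with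
    | zero => simp
    | tmul r s => simp [swap12]
    | add p q hp hq => simp only [add_tmul, map_add, tmul_add, hp, hq]
  exact LinearMap.congr_fun h z

/-- The canonical isomorphism `(A⊗A)⊗(B⊗B) ≅ (A⊗B)⊗(A⊗B)` as a linear map. -/
def PhiM : (A ⊗[k] A) ⊗[k] (B ⊗[k] B) →ₗ[k] (A ⊗[k] B) ⊗[k] (A ⊗[k] B) :=
  (TensorProduct.tensorTensorTensorComm k A A B B).toLinearMap

/-- The canonical shuffle `(A⊗(A⊗A))⊗(B⊗(B⊗B)) → (A⊗B)⊗((A⊗B)⊗(A⊗B))`. -/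
def mixmap : (A ⊗[k] (A ⊗[k] A)) ⊗[k] (B ⊗[k] (B ⊗[k] B)) →ₗ[k]
    (A ⊗[k] B) ⊗[k] ((A ⊗[k] B) ⊗[k] (A ⊗[k] B)) :=
  TensorProduct.map LinearMap.id PhiM ∘ₗ
    (TensorProduct.tensorTensorTensorComm k A (A ⊗[k] A) B (B ⊗[k] B)).toLinearMap

theorem M1map (f : A →ₗ[k] A ⊗[k] A) (h : B →ₗ[k] B ⊗[k] B) :
    rmap3 (PhiM ∘ₗ TensorProduct.map f h) ∘ₗ (PhiM (k := k) (A := A) (B := B)) =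
      mixmap ∘ₗ TensorProduct.map (rmap3 f) (rmap3 h) := by
  ext a1 a2 x1 x2
  simp [rmap3, PhiM, mixmap]

theorem M1e (f : A →ₗ[k] A ⊗[k] A) (h : B →ₗ[k] B ⊗[k] B) (u : A ⊗[k] A) (v : B ⊗[k] B) :
    rmap3 (PhiM ∘ₗ TensorProduct.map f h) (PhiM (u ⊗ₜ[k] v)) =
      mixmap (rmap3 f u ⊗ₜ[k] rmap3 h v) := by
  have := LinearMap.congr_fun (M1map f h) (u ⊗ₜ[k] v)
  simpa only [LinearMap.coe_comp, Function.comp_apply, map_tmul] using this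

theorem M2key :
    (TensorProduct.assoc k (A ⊗[k] B) (A ⊗[k] B) (A ⊗[k] B)).toLinearMap ∘ₗ
        TensorProduct.map (PhiM (k := k) (A := A) (B := B)) LinearMap.id =
      mixmap ∘ₗ TensorProduct.map (TensorProduct.assoc k A A A).toLinearMap
          (TensorProduct.assoc k B B B).toLinearMap ∘ₗ
        (TensorProduct.tensorTensorTensorComm k (A ⊗[k] A) (B ⊗[k] B) A B).toLinearMap := by
  ext a1 a2 x1 x2 c y
  simp [PhiM, mixmap]

theorem M2map (f : A →ₗ[k] A ⊗[k] A) (h : B →ₗ[k] B ⊗[k] B) :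
    lmap3 (PhiM ∘ₗ TensorProduct.map f h) ∘ₗ (PhiM (k := k) (A := A) (B := B)) =
      mixmap ∘ₗ TensorProduct.map (lmap3 f) (lmap3 h) := by
  ext a1 a2 x1 x2
  have := LinearMap.congr_fun (M2key (k := k) (A := A) (B := B))
    ((f a1 ⊗ₜ[k] h x1) ⊗ₜ[k] (a2 ⊗ₜ[k] x2))
  simp only [LinearMap.coe_comp, Function.comp_apply, map_tmul, LinearMap.id_coe, id_eq,
    LinearEquiv.coe_coe, tensorTensorTensorComm_tmul] at this
  simpa [lmap3, PhiM, mixmap] using this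

theorem M2e (f : A →ₗ[k] A ⊗[k] A) (h : B →ₗ[k] B ⊗[k] B) (u : A ⊗[k] A) (v : B ⊗[k] B) :
    lmap3 (PhiM ∘ₗ TensorProduct.map f h) (PhiM (u ⊗ₜ[k] v)) =
      mixmap (lmap3 f u ⊗ₜ[k] lmap3 h v) := by
  have := LinearMap.congr_fun (M2map f h) (u ⊗ₜ[k] v)
  simpa only [LinearMap.coe_comp, Function.comp_apply, map_tmul] using this

theorem M3map : swap12 ∘ₗ (mixmap (k := k) (A := A) (B := B)) =
    mixmap ∘ₗ TensorProduct.map swap12 swap12 := by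
  ext a b c x y z
  simp [PhiM, mixmap, swap12]

theorem M3e (p : A ⊗[k] (A ⊗[k] A)) (q : B ⊗[k] (B ⊗[k] B)) :
    swap12 (mixmap (p ⊗ₜ[k] q)) = mixmap (swap12 p ⊗ₜ[k] swap12 q) := by
  have := LinearMap.congr_fun (M3map (k := k) (A := A) (B := B)) (p ⊗ₜ[k] q)
  simpa only [LinearMap.coe_comp, Function.comp_apply, map_tmul] using this

end AuxPreLie

set_option maxHeartbeats 1600000 in
/-- The map `δ(a⊗x) := β(a)•Δβ(x) − τα(a)•τΔα(x)` on the tensor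
product of a pre-Novikov coalgebra `(A, α, β)` and a right Novikov co-dialgebra
`(B, Δα, Δβ)` makes `(A⊗B, δ)` a pre-Lie coalgebra. Here `•` is the canonical
isomorphism `(A⊗A)⊗(B⊗B) ≅ (A⊗B)⊗(A⊗B)`. -/
theorem induced_preLie_coalgebra (k A B : Type*) [Field k] [CharZero k]
    [AddCommGroup A] [Module k A] [AddCommGroup B] [Module k B]
    (α β : A →ₗ[k] A ⊗[k] A) (hA : IsPreNovikovCoalgebra α β)
    (Da Db : B →ₗ[k] B ⊗[k] B) (hB : IsRightNovikovCoDialgebra Da Db) :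
    IsPreLieCoalgebra
      ((TensorProduct.tensorTensorTensorComm k A A B B).toLinearMap ∘ₗ
          TensorProduct.map β Db
        - (TensorProduct.tensorTensorTensorComm k A A B B).toLinearMap ∘ₗ
          TensorProduct.map (tau2 ∘ₗ α) (tau2 ∘ₗ Da)) := by
  rw [show (TensorProduct.tensorTensorTensorComm k A A B B).toLinearMap ∘ₗ
          TensorProduct.map β Db
        - (TensorProduct.tensorTensorTensorComm k A A B B).toLinearMap ∘ₗ
          TensorProduct.map (tau2 ∘ₗ α) (tau2 ∘ₗ Da)
      = PhiM ∘ₗ TensorProduct.map β Db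
        - PhiM ∘ₗ TensorProduct.map (tau2 ∘ₗ α) (tau2 ∘ₗ Da) from rfl]
  haveI : IsRightCancelAdd ((A ⊗[k] B) ⊗[k] ((A ⊗[k] B) ⊗[k] (A ⊗[k] B))) :=
    (AddCancelMonoid.toIsCancelAdd _).toIsRightCancelAdd
  intro w
  induction w using TensorProduct.induction_on with
  | zero => simp
  | add u v hu hv =>
      simp only [map_add]
      linear_combination (norm := module) hu + hv
  | tmul a x =>
      have hA1 := hA.1 a
      have hA2 := hA.2.1 a
      have hA3 := hA.2.2.1 a
      have hA4 := hA.2.2.2 a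
      have hB1 := hB.1 x
      have hB2 := hB.2.1 x
      have hB3 := hB.2.2.1 x
      have hB4 := hB.2.2.2.1 x
      have hB5 := hB.2.2.2.2.1 x
      have hB6 := hB.2.2.2.2.2 x
      simp only [rmap3_add, lmap3_add, map_add] at hA1 hA2 hA3 hA4
      simp only [LinearMap.sub_apply, LinearMap.coe_comp, Function.comp_apply, map_tmul,
        rmap3_sub, lmap3_sub, map_sub, M1e, M2e, c1e, c2e, c3e, c4e, M3e,
        sw12_sw12, sw23_sw23, braid]
      have hA1_ts := congrArg (fun z => swap23 (swap12 (z))) hA1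
      simp only [map_add, map_sub, map_zero, sw12_sw12, sw23_sw23, braid] at hA1_ts
      have hA1_sts := congrArg (fun z => swap12 (swap23 (swap12 (z)))) hA1
      simp only [map_add, map_sub, map_zero, sw12_sw12, sw23_sw23, braid] at hA1_sts
      have hA3_s := congrArg (fun z => swap12 (z)) hA3
      simp only [map_add, map_sub, map_zero, sw12_sw12, sw23_sw23, braid] at hA3_s
      have hA4_ts := congrArg (fun z => swap23 (swap12 (z))) hA4
      simp only [map_add, map_sub, map_zero, sw12_sw12, sw23_sw23, braid] at hA4_ts
      have hB2_t := congrArg (fun z => swap23 (z)) hB2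
      change swap23 (rmap3 Da (Db x)) = swap23 (swap12 (rmap3 Da (Da x))) at hB2_t
      have hB2_st := congrArg (fun z => swap12 (swap23 (z))) hB2
      change swap12 (swap23 (rmap3 Da (Db x))) = swap12 (swap23 (swap12 (rmap3 Da (Da x)))) at hB2_st
      have hB3_s := congrArg (fun z => swap12 (z)) hB3
      change swap12 (lmap3 Db (Db x)) = swap12 (lmap3 Da (Db x)) at hB3_s
      have hB4_ts := congrArg (fun z => swap23 (swap12 (z))) hB4
      change swap23 (swap12 (rmap3 Db (Da x))) = swap23 (swap12 (rmap3 Da (Da x))) at hB4_ts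
      have hB4_sts := congrArg (fun z => swap12 (swap23 (swap12 (z)))) hB4
      change swap12 (swap23 (swap12 (rmap3 Db (Da x)))) = swap12 (swap23 (swap12 (rmap3 Da (Da x)))) at hB4_sts
      have hB5_s := congrArg (fun z => swap12 (z)) hB5
      simp only [map_add, map_sub, map_zero, sw12_sw12, sw23_sw23, braid] at hB5_s
      have hB6_ts := congrArg (fun z => swap23 (swap12 (z))) hB6
      simp only [map_add, map_sub, map_zero, sw12_sw12, sw23_sw23, braid] at hB6_ts
      have t0 := congrArg (fun z => mixmap (z ⊗ₜ[k] (swap23 (swap12 (rmap3 Db (Da x)))))) hA1_ts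
      simp only [add_tmul, sub_tmul, zero_tmul, map_add, map_sub, map_zero] at t0
      have t1 := congrArg (fun z => mixmap (z ⊗ₜ[k] (swap12 (swap23 (swap12 (rmap3 Db (Da x))))))) hA1_sts
      simp only [add_tmul, sub_tmul, zero_tmul, map_add, map_sub, map_zero] at t1
      have t2 := congrArg (fun z => mixmap (z ⊗ₜ[k] (swap12 (rmap3 Db (Db x))))) hA2
      simp only [add_tmul, sub_tmul, zero_tmul, map_add, map_sub, map_zero] at t2
      have t3 := congrArg (fun z => mixmap (z ⊗ₜ[k] (swap23 (lmap3 Db (Da x))))) hA3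
      simp only [add_tmul, sub_tmul, zero_tmul, map_add, map_sub, map_zero] at t3
      have t4 := congrArg (fun z => mixmap (z ⊗ₜ[k] (swap23 (swap12 (rmap3 Db (Da x)))))) hA3
      simp only [add_tmul, sub_tmul, zero_tmul, map_add, map_sub, map_zero] at t4
      have t5 := congrArg (fun z => mixmap (z ⊗ₜ[k] (swap12 (swap23 (lmap3 Db (Da x)))))) hA3_s
      simp only [add_tmul, sub_tmul, zero_tmul, map_add, map_sub, map_zero] at t5
      have t6 := congrArg (fun z => mixmap (z ⊗ₜ[k] (swap12 (swap23 (swap12 (rmap3 Db (Da x))))))) hA3_s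
      simp only [add_tmul, sub_tmul, zero_tmul, map_add, map_sub, map_zero] at t6
      have t7 := congrArg (fun z => mixmap (z ⊗ₜ[k] (swap12 (swap23 (swap12 (lmap3 Da (Da x))))))) hA4_ts
      simp only [add_tmul, sub_tmul, zero_tmul, map_add, map_sub, map_zero] at t7
      have t8 := congrArg (fun z => mixmap (z ⊗ₜ[k] (swap12 (swap23 (swap12 (rmap3 Db (Da x))))))) hA4_ts
      simp only [add_tmul, sub_tmul, zero_tmul, map_add, map_sub, map_zero] at t8
      have t9 := congrArg (fun z => mixmap ((lmap3 α (β a)) ⊗ₜ[k] z)) hB1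
      beta_reduce at t9
      have t10 := congrArg (fun z => mixmap ((lmap3 β (β a)) ⊗ₜ[k] z)) hB1
      beta_reduce at t10
      have t11 := congrArg (fun z => mixmap ((rmap3 β (β a)) ⊗ₜ[k] z)) hB1
      beta_reduce at t11
      have t12 := congrArg (fun z => mixmap ((lmap3 α (β a)) ⊗ₜ[k] z)) hB2_t
      beta_reduce at t12
      have t13 := congrArg (fun z => mixmap ((lmap3 β (β a)) ⊗ₜ[k] z)) hB2_t
      beta_reduce at t13
      have t14 := congrArg (fun z => mixmap ((swap23 (rmap3 α (β a))) ⊗ₜ[k] z)) hB2_t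
      beta_reduce at t14
      have t15 := congrArg (fun z => mixmap ((swap12 (lmap3 α (β a))) ⊗ₜ[k] z)) hB2_st
      beta_reduce at t15
      have t16 := congrArg (fun z => mixmap ((swap12 (lmap3 β (β a))) ⊗ₜ[k] z)) hB2_st
      beta_reduce at t16
      have t17 := congrArg (fun z => mixmap ((swap12 (swap23 (rmap3 α (β a)))) ⊗ₜ[k] z)) hB2_st
      beta_reduce at t17
      have t18 := congrArg (fun z => mixmap ((lmap3 α (β a)) ⊗ₜ[k] z)) hB3
      beta_reduce at t18
      have t19 := congrArg (fun z => mixmap ((swap12 (lmap3 α (β a))) ⊗ₜ[k] z)) hB3_s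
      beta_reduce at t19
      have t20 := congrArg (fun z => mixmap ((lmap3 α (β a)) ⊗ₜ[k] z)) hB4_ts
      beta_reduce at t20
      have t21 := congrArg (fun z => mixmap ((lmap3 β (β a)) ⊗ₜ[k] z)) hB4_ts
      beta_reduce at t21
      have t22 := congrArg (fun z => mixmap ((swap23 (rmap3 α (β a))) ⊗ₜ[k] z)) hB4_ts
      beta_reduce at t22
      have t23 := congrArg (fun z => mixmap ((swap23 (swap12 (rmap3 α (α a)))) ⊗ₜ[k] z)) hB4_ts
      beta_reduce at t23
      have t24 := congrArg (fun z => mixmap ((swap12 (lmap3 α (β a))) ⊗ₜ[k] z)) hB4_sts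
      beta_reduce at t24
      have t25 := congrArg (fun z => mixmap ((swap12 (lmap3 β (β a))) ⊗ₜ[k] z)) hB4_sts
      beta_reduce at t25
      have t26 := congrArg (fun z => mixmap ((swap23 (swap12 (lmap3 α (α a)))) ⊗ₜ[k] z)) hB4_sts
      beta_reduce at t26
      have t27 := congrArg (fun z => mixmap ((swap12 (swap23 (rmap3 α (β a)))) ⊗ₜ[k] z)) hB4_sts
      beta_reduce at t27
      have t28 := congrArg (fun z => mixmap ((swap12 (swap23 (swap12 (rmap3 α (α a))))) ⊗ₜ[k] z)) hB4_sts
      beta_reduce at t28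
      have t29 := congrArg (fun z => mixmap ((lmap3 α (β a)) ⊗ₜ[k] z)) hB5
      simp only [tmul_add, tmul_sub, tmul_zero, map_add, map_sub, map_zero] at t29
      have t30 := congrArg (fun z => mixmap ((lmap3 β (β a)) ⊗ₜ[k] z)) hB5
      simp only [tmul_add, tmul_sub, tmul_zero, map_add, map_sub, map_zero] at t30
      have t31 := congrArg (fun z => mixmap ((swap12 (lmap3 α (β a))) ⊗ₜ[k] z)) hB5_s
      simp only [tmul_add, tmul_sub, tmul_zero, map_add, map_sub, map_zero] at t31
      have t32 := congrArg (fun z => mixmap ((swap12 (lmap3 β (β a))) ⊗ₜ[k] z)) hB5_s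
      simp only [tmul_add, tmul_sub, tmul_zero, map_add, map_sub, map_zero] at t32
      have t33 := congrArg (fun z => mixmap ((swap23 (swap12 (lmap3 α (α a)))) ⊗ₜ[k] z)) hB6_ts
      simp only [tmul_add, tmul_sub, tmul_zero, map_add, map_sub, map_zero] at t33
      set_option maxHeartbeats 4000000 in
      linear_combination (norm := module) - t0 + t1 + t2 + t3 - t4 - t5 + t6 + t7 - t8 - t9 - t10 + t11 + t12 + t13 - t14 - t15 - t16 + t17 + t18 - t19 - t20 - t21 + t22 - t23 + t24 + t25 - t26 - t27 + t28 + t29 + t30 - t31 - t32 + t33
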